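/- Let $P(z)$ be a degree-$n$ polynomial with all zeros in $|z| \le 1$. Then $\max_{|z|=1} |P'(z)| \ge \frac{1}{2}\left(n + \frac{|a_n| - |a_0|}{|a_n| + |a_0|}\right) \max_{|z|=1} |P(z)|$, where $a_n$ is the leading coefficient and $a_0$ the constant term of $P$. -/

import Mathlib

open Polynomial Multiset

private lemma prod01 (s : Multiset ℝ) (h : ∀ t ∈ s, 0 ≤ t ∧ t ≤ 1) : 0 ≤ s.prod ∧ s.prod ≤ 1 := by
  induction s using Multiset.induction_on with
  | empty => simp
  | cons a s ih =>
      have ha := h a (mem_cons_self a s)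
      have ihs := ih (fun t ht => h t (mem_cons_of_mem ht))
      rw [Multiset.prod_cons]
      exact ⟨mul_nonneg ha.1 ihs.1, by nlinarith [ha.1, ha.2, ihs.1, ihs.2]⟩

private lemma scalar_sum (s : Multiset ℝ) (h : ∀ t ∈ s, 0 ≤ t ∧ t ≤ 1) :
    (s.card : ℝ) / 2 + (1 - s.prod) / (2 * (1 + s.prod)) ≤ (s.map (fun t => 1 / (1 + t))).sum := by
  induction s using Multiset.induction_on with
  | empty => simp
  | cons a s ih =>
      have ha := h a (mem_cons_self a s)
      have ihs := ih (fun t ht => h t (mem_cons_of_mem ht))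
      have hp := prod01 s (fun t ht => h t (mem_cons_of_mem ht))
      rw [Multiset.prod_cons, Multiset.map_cons, Multiset.sum_cons, Multiset.card_cons]
      have h1 : (0:ℝ) < 1 + a := by linarith [ha.1]
      have h2 : (0:ℝ) < 1 + s.prod := by linarith [hp.1]
      have h3 : (0:ℝ) < 1 + a * s.prod := by nlinarith [ha.1, hp.1]
      have key : ((s.card : ℝ) + 1) / 2 + (1 - a * s.prod) / (2 * (1 + a * s.prod)) ≤
          1 / (1 + a) + ((s.card : ℝ) / 2 + (1 - s.prod) / (2 * (1 + s.prod))) := by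
        rw [← sub_nonneg]
        have expand : 1 / (1 + a) + ((s.card : ℝ) / 2 + (1 - s.prod) / (2 * (1 + s.prod))) -
            (((s.card : ℝ) + 1) / 2 + (1 - a * s.prod) / (2 * (1 + a * s.prod))) =
            ((1 - a) * (1 - s.prod) * (1 - a * s.prod)) /
              (2 * ((1 + a) * (1 + s.prod) * (1 + a * s.prod))) := by
          field_simp
          ring
        rw [expand]
        have hap : a * s.prod ≤ 1 := by nlinarith [ha.1, ha.2, hp.1, hp.2]
        have hnum : 0 ≤ (1 - a) * (1 - s.prod) * (1 - a * s.prod) :=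
          mul_nonneg (mul_nonneg (by linarith [ha.2]) (by linarith [hp.2])) (by linarith)
        positivity
      push_cast
      calc ((s.card : ℝ) + 1) / 2 + (1 - a * s.prod) / (2 * (1 + a * s.prod))
          ≤ 1 / (1 + a) + ((s.card : ℝ) / 2 + (1 - s.prod) / (2 * (1 + s.prod))) := key
        _ ≤ 1 / (1 + a) + (Multiset.map (fun t => 1 / (1 + t)) s).sum := by linarith [ihs]

private lemma re_div_ge (z a : ℂ) (hz : ‖z‖ = 1) (ha : ‖a‖ ≤ 1) (hne : z - a ≠ 0) :
    1 / (1 + ‖a‖) ≤ (z / (z - a)).re := by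
  have hz2 : z.re ^ 2 + z.im ^ 2 = 1 := by
    have := Complex.sq_norm z
    rw [Complex.normSq_apply, hz] at this
    nlinarith [this]
  have ham : ‖a‖ ^ 2 = a.re ^ 2 + a.im ^ 2 := by
    have := Complex.sq_norm a
    rw [Complex.normSq_apply] at this
    nlinarith [this]
  set m := ‖a‖ with hm
  have hm0 : 0 ≤ m := norm_nonneg a
  have hns : Complex.normSq (z - a) = 1 - 2 * (z.re * a.re + z.im * a.im) + m ^ 2 := by
    rw [Complex.normSq_apply]
    simp only [Complex.sub_re, Complex.sub_im]
    nlinarith [hz2, ham]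
  have hnspos : 0 < Complex.normSq (z - a) := Complex.normSq_pos.2 hne
  have hre : (z / (z - a)).re =
      (1 - (z.re * a.re + z.im * a.im)) / Complex.normSq (z - a) := by
    rw [Complex.div_re, ← add_div]
    congr 1
    simp only [Complex.sub_re, Complex.sub_im]
    nlinarith [hz2]
  rw [hre]
  have hcs : (z.re * a.re + z.im * a.im) ^ 2 ≤ m ^ 2 := by
    nlinarith [sq_nonneg (z.re * a.im - z.im * a.re), hz2, ham]
  have hd : -m ≤ z.re * a.re + z.im * a.im := by nlinarith [hcs, hm0]
  rw [div_le_div_iff₀ (by positivity) hnspos, hns]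
  nlinarith [hd, hm0, ha,
    mul_nonneg (by linarith : (0:ℝ) ≤ m + (z.re * a.re + z.im * a.im)) (by linarith : (0:ℝ) ≤ 1 - m)]

private lemma logderiv (s : Multiset ℂ) (z : ℂ)
    (hnz : Polynomial.eval z (s.map (fun r => X - C r)).prod ≠ 0) :
    z * Polynomial.eval z (derivative (s.map (fun r => X - C r)).prod) =
      Polynomial.eval z (s.map (fun r => X - C r)).prod * (s.map (fun r => z / (z - r))).sum := by
  induction s using Multiset.induction_on with
  | empty => simp
  | cons a s ih =>
      rw [Multiset.map_cons, Multiset.prod_cons] at hnz ⊢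
      rw [Multiset.map_cons, Multiset.sum_cons]
      rw [Polynomial.eval_mul] at hnz
      have hza : Polynomial.eval z (X - C a) ≠ 0 := fun h => hnz (by rw [h, zero_mul])
      have hQ : Polynomial.eval z (s.map (fun r => X - C r)).prod ≠ 0 :=
        fun h => hnz (by rw [h, mul_zero])
      have hza' : z - a ≠ 0 := by simpa using hza
      have ihs := ih hQ
      rw [derivative_mul, Polynomial.eval_add, Polynomial.eval_mul, Polynomial.eval_mul]
      simp only [Polynomial.eval_sub, Polynomial.eval_X, Polynomial.eval_C, derivative_sub,
        derivative_X, derivative_C, sub_zero, Polynomial.eval_one, one_mul]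
      field_simp
      simp only [Polynomial.eval_mul, Polynomial.eval_sub, Polynomial.eval_X, Polynomial.eval_C]
      linear_combination (z - a) ^ 2 * ihs

private lemma norm_multiset_prod' (s : Multiset ℂ) : ‖s.prod‖ = (s.map norm).prod := by
  induction s using Multiset.induction_on with
  | empty => simp
  | cons a s ih => simp [norm_mul, ih]

private lemma re_multiset_sum (s : Multiset ℂ) : s.sum.re = (s.map Complex.re).sum := by
  induction s using Multiset.induction_on with
  | empty => simp
  | cons a s ih => simp [ih]

theorem stmt_16 (P : Polynomial ℂ) (n : ℕ) (hn : 0 < n) (hdeg : P.natDegree = n)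
    (hzeros : ∀ z : ℂ, P.IsRoot z → ‖z‖ ≤ 1) :
    1 / 2 * ((n : ℝ) + (‖P.leadingCoeff‖ - ‖P.coeff 0‖) / (‖P.leadingCoeff‖ + ‖P.coeff 0‖)) *
        (⨆ w : Metric.sphere (0 : ℂ) 1, ‖P.eval (w : ℂ)‖) ≤
      ⨆ w : Metric.sphere (0 : ℂ) 1, ‖P.derivative.eval (w : ℂ)‖ := by
  classical
  haveI : Nonempty (Metric.sphere (0 : ℂ) 1) := ⟨⟨1, by simp⟩⟩
  have hP0 : P ≠ 0 := fun h => by simp [h] at hdeg; omega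
  have hsplit : P.Splits := IsAlgClosed.splits P
  have hfact : P = C P.leadingCoeff * (P.roots.map fun a => X - C a).prod :=
    hsplit.eq_prod_roots
  have hcard : P.roots.card = n := by
    have := hsplit.natDegree_eq_card_roots
    omega
  -- maxima on the sphere
  have hK : IsCompact (Metric.sphere (0 : ℂ) 1) := isCompact_sphere 0 1
  have hcontP : ContinuousOn (fun w : ℂ => ‖P.eval w‖) (Metric.sphere (0 : ℂ) 1) :=
    (P.continuous_aeval.norm).continuousOn
  obtain ⟨z₀, hz₀K, hz₀max⟩ := hK.exists_isMaxOn ⟨1, by simp⟩ hcontP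
  have hcontP' : ContinuousOn (fun w : ℂ => ‖P.derivative.eval w‖) (Metric.sphere (0 : ℂ) 1) :=
    (P.derivative.continuous_aeval.norm).continuousOn
  obtain ⟨z₁, hz₁K, hz₁max⟩ := hK.exists_isMaxOn ⟨1, by simp⟩ hcontP'
  have hbddP' : BddAbove (Set.range fun w : Metric.sphere (0 : ℂ) 1 => ‖P.derivative.eval (w : ℂ)‖) := by
    refine ⟨‖P.derivative.eval z₁‖, ?_⟩
    rintro x ⟨w, rfl⟩; exact hz₁max w.2
  have hsupP : (⨆ w : Metric.sphere (0 : ℂ) 1, ‖P.eval (w : ℂ)‖) = ‖P.eval z₀‖ := by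
    refine le_antisymm (ciSup_le fun w => hz₀max w.2) ?_
    refine le_ciSup (f := fun w : Metric.sphere (0 : ℂ) 1 => ‖P.eval (w : ℂ)‖) ?_ ⟨z₀, hz₀K⟩
    exact ⟨‖P.eval z₀‖, by rintro x ⟨w, rfl⟩; exact hz₀max w.2⟩
  have hP'le : ‖P.derivative.eval z₀‖ ≤ ⨆ w : Metric.sphere (0 : ℂ) 1, ‖P.derivative.eval (w : ℂ)‖ :=
    le_ciSup hbddP' ⟨z₀, hz₀K⟩
  rw [hsupP]
  by_cases hPz : P.eval z₀ = 0
  · rw [hPz]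
    simp only [norm_zero, mul_zero]
    exact le_trans (norm_nonneg _) hP'le
  -- main case
  have hz1 : ‖z₀‖ = 1 := by simpa using hz₀K
  set s : Multiset ℂ := P.roots with hs
  have hroots1 : ∀ r ∈ s, ‖r‖ ≤ 1 := fun r hr =>
    hzeros r (isRoot_of_mem_roots hr)
  have hprodne : Polynomial.eval z₀ (s.map (fun r => X - C r)).prod ≠ 0 := by
    intro h
    apply hPz
    rw [hfact]
    simp [h]
  have hld := logderiv s z₀ hprodne
  set S : ℂ := (s.map (fun r => z₀ / (z₀ - r))).sum with hS
  have hder : P.derivative = C P.leadingCoeff * derivative (s.map (fun r => X - C r)).prod := by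
    conv_lhs => rw [hfact]
    rw [derivative_mul, derivative_C, zero_mul, zero_add]
  have hzP' : z₀ * P.derivative.eval z₀ = P.eval z₀ * S := by
    rw [hder]
    conv_rhs => rw [hfact]
    simp only [Polynomial.eval_mul, Polynomial.eval_C]
    rw [mul_left_comm, hld]
    ring
  -- each root is different from z₀
  have hne : ∀ r ∈ s, z₀ - r ≠ 0 := by
    intro r hr h
    apply hprodne
    have hdvd : (X - C r) ∣ (s.map (fun r => X - C r)).prod :=
      Multiset.dvd_prod (Multiset.mem_map_of_mem _ hr)
    obtain ⟨q, hq⟩ := hdvd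
    rw [hq, Polynomial.eval_mul]
    simp only [Polynomial.eval_sub, Polynomial.eval_X, Polynomial.eval_C]
    rw [h, zero_mul]
  -- lower bound on Re S
  have hReS : (s.map (fun r => 1 / (1 + ‖r‖))).sum ≤ S.re := by
    rw [hS, re_multiset_sum, Multiset.map_map]
    exact Multiset.sum_map_le_sum_map _ _ fun r hr =>
      re_div_ge z₀ r hz1 (hroots1 r hr) (hne r hr)
  -- the scalar bound
  set t : Multiset ℝ := s.map norm with ht
  have htmem : ∀ x ∈ t, 0 ≤ x ∧ x ≤ 1 := by
    intro x hx
    obtain ⟨r, hr, rfl⟩ := Multiset.mem_map.1 hx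
    exact ⟨norm_nonneg r, hroots1 r hr⟩
  have htcard : (t.card : ℝ) = n := by rw [ht, Multiset.card_map, hcard]
  have hscal := scalar_sum t htmem
  have hsum_eq : (t.map (fun x => 1 / (1 + x))).sum = (s.map (fun r => 1 / (1 + ‖r‖))).sum := by
    rw [ht, Multiset.map_map]; rfl
  -- product equals ratio of coefficients
  have hA : (0:ℝ) < ‖P.leadingCoeff‖ := by
    simp [Polynomial.leadingCoeff_ne_zero.2 hP0]
  have hcoeff0 : ‖P.coeff 0‖ = ‖P.leadingCoeff‖ * t.prod := by
    rw [Polynomial.coeff_zero_eq_eval_zero]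
    conv_lhs => rw [hfact]
    rw [Polynomial.eval_mul, Polynomial.eval_C, norm_mul]
    congr 1
    rw [Polynomial.eval_multiset_prod, Multiset.map_map, norm_multiset_prod', Multiset.map_map, ht]
    congr 1
    apply Multiset.map_congr rfl
    intro r _
    simp
  have hprod01 := prod01 t htmem
  have hπ1 : (0:ℝ) < 1 + t.prod := by linarith [hprod01.1]
  -- final chain
  have hratio : (‖P.leadingCoeff‖ - ‖P.coeff 0‖) / (‖P.leadingCoeff‖ + ‖P.coeff 0‖) =
      (1 - t.prod) / (1 + t.prod) := by
    rw [hcoeff0]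
    rw [show ‖P.leadingCoeff‖ - ‖P.leadingCoeff‖ * t.prod = ‖P.leadingCoeff‖ * (1 - t.prod) by ring,
      show ‖P.leadingCoeff‖ + ‖P.leadingCoeff‖ * t.prod = ‖P.leadingCoeff‖ * (1 + t.prod) by ring]
    rw [mul_div_mul_left _ _ (ne_of_gt hA)]
  have hc_le : 1 / 2 * ((n : ℝ) + (‖P.leadingCoeff‖ - ‖P.coeff 0‖) / (‖P.leadingCoeff‖ + ‖P.coeff 0‖)) ≤
      (s.map (fun r => 1 / (1 + ‖r‖))).sum := by
    rw [hratio, ← hsum_eq]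
    refine le_trans (le_of_eq ?_) hscal
    rw [htcard]
    field_simp
  have hSre_le : S.re ≤ ‖S‖ := Complex.re_le_norm S
  have hnormP' : ‖P.eval z₀‖ * ‖S‖ = ‖P.derivative.eval z₀‖ := by
    rw [← norm_mul, ← hzP', norm_mul, hz1, one_mul]
  have hPz0nn : (0:ℝ) ≤ ‖P.eval z₀‖ := norm_nonneg _
  calc 1 / 2 * ((n : ℝ) + (‖P.leadingCoeff‖ - ‖P.coeff 0‖) / (‖P.leadingCoeff‖ + ‖P.coeff 0‖)) *
        ‖P.eval z₀‖
      ≤ (s.map (fun r => 1 / (1 + ‖r‖))).sum * ‖P.eval z₀‖ :=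
        mul_le_mul_of_nonneg_right hc_le hPz0nn
    _ ≤ ‖S‖ * ‖P.eval z₀‖ :=
        mul_le_mul_of_nonneg_right (le_trans hReS hSre_le) hPz0nn
    _ = ‖P.derivative.eval z₀‖ := by rw [mul_comm]; exact hnormP'
    _ ≤ _ := hP'le
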